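/- Let G be a finite connected simple graph with N ≥ 3 vertices and let U be a subset of the vertices of G. Define a simple graph G' as follows: the vertices of G' are the vertices of G not in U, together with N copies (u,1), …, (u,N) of each vertex u in U; the edges of G' are: (i) for each u in U, the cycle edges (u,i)(u,i+1) for 1 ≤ i < N together with (u,N)(u,1); (ii) for each edge xy of G with x, y not in U, the edge xy; (iii) for each edge uy of G with u in U and y not in U, the edges (u,i)y for all 1 ≤ i ≤ N; and (iv) for each edge uw of G with u, w both in U, the edges (u,i)(w,j) for all 1 ≤ i, j ≤ N. Then G has a walk visiting every vertex of G, with adjacent start and end vertices, in which every vertex not in U occurs exactly once, if and only if G' has a Hamiltonian cycle. -/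

import Mathlib

open SimpleGraph

/-- The base relation of the HCP construction `G'` built from a graph `G`, a set `U` of
(unbounded) vertices and a parameter `N`.  Vertices are the vertices of `G` outside `U`
(`Sum.inl`) together with `N` copies of each vertex of `U` (`Sum.inr`).  Edges: (i) for each
`u ∈ U`, the cycle edges `(u,i)(u,i+1 mod N)`; (ii) for each edge `xy` of `G` with
`x, y ∉ U`, the edge `xy`; (iii) for each edge `uy` of `G` with `u ∈ U`, `y ∉ U`, the edges
`(u,i)y` for all `i`; (iv) for each edge `uw` of `G` with `u, w ∈ U`, the edges `(u,i)(w,j)`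
for all `i, j`. -/
def hcpRel {V : Type*} (G : SimpleGraph V) (U : Set V) (N : ℕ) :
    ((↥Uᶜ) ⊕ (↥U × Fin N)) → ((↥Uᶜ) ⊕ (↥U × Fin N)) → Prop
  | Sum.inl x, Sum.inl y => G.Adj x.1 y.1
  | Sum.inl x, Sum.inr p => G.Adj x.1 p.1.1
  | Sum.inr p, Sum.inl y => G.Adj p.1.1 y.1
  | Sum.inr p, Sum.inr q =>
      (p.1 = q.1 ∧ (q.2 : ℕ) = ((p.2 : ℕ) + 1) % N) ∨ G.Adj p.1.1 q.1.1

/-- The HCP construction `G'`. -/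
def hcpGraph {V : Type*} (G : SimpleGraph V) (U : Set V) (N : ℕ) :
    SimpleGraph ((↥Uᶜ) ⊕ (↥U × Fin N)) :=
  SimpleGraph.fromRel (hcpRel G U N)

set_option linter.unusedSectionVars false

namespace HCPAux

open SimpleGraph.Walk

set_option linter.unusedSectionVars false

variable {V : Type*} [DecidableEq V] {G : SimpleGraph V} {U : Set V} {N : ℕ}

section Excise

open SimpleGraph.Walk

variable {V : Type*} [Fintype V] [DecidableEq V] {G : SimpleGraph V} {U : Set V}

private lemma exciseAux :
    ∀ (k : ℕ) {u b : V} (t : G.Walk u b) (A : List V),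
      k + 1 ≤ t.support.count u →
      (∀ x ∉ U, (A ++ t.support).count x = 1) →
      (∃ t' : G.Walk u b, t'.length < t.length ∧
          (∀ w ∈ t.support, w ∈ A ∨ w ∈ t'.support) ∧
          (∀ x ∉ U, t'.support.count x = t.support.count x)) ∨
      (∃ D : Finset V, k ≤ D.card ∧ u ∉ D ∧ ∀ w ∈ D, w ∉ A)
  | 0, u, b, t, A, _, _ => Or.inr ⟨∅, by simp, by simp, by simp⟩
  | (k+1), u, b, t, A, hcount, hA => by
    cases t with
    | nil => simp at hcount
    | @cons _ z _ e r =>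
      have hur : u ∈ r.support := by
        have h1 : (Walk.cons e r).support.count u = r.support.count u + 1 := by
          simp [Walk.support_cons, List.count_cons]
        rw [← List.count_pos_iff]
        omega
      set r1 := r.takeUntil u hur with hr1
      set r2 := r.dropUntil u hur with hr2
      have hspec : r1.append r2 = r := r.take_spec hur
      have hsupr : r.support = r1.support ++ r2.support.tail := by
        rw [← hspec, Walk.support_append]
      have hS2 : r2.support = u :: r2.support.tail := r2.support_eq_cons
      have hc1 : r1.support.count u = 1 := r.count_support_takeUntil_eq_one hur
      have htc : (Walk.cons e r).support = u :: (r1.support ++ r2.support.tail) := by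
        rw [Walk.support_cons, hsupr]
      have hcr2 : k + 1 ≤ r2.support.count u := by
        have h2 : (Walk.cons e r).support.count u
            = 1 + (r1.support.count u + r2.support.tail.count u) := by
          rw [htc]
          simp [List.count_cons, List.count_append]
          omega
        have h3 : r2.support.count u = r2.support.tail.count u + 1 := by
          conv_lhs => rw [hS2]
          simp [List.count_cons, -Walk.cons_tail_support]
        omega
      have huU : u ∈ U := by
        by_contra huU
        have h4 := hA u huU
        rw [htc] at h4
        have h3 : r2.support.count u = r2.support.tail.count u + 1 := by
          conv_lhs => rw [hS2]
          simp [List.count_cons, -Walk.cons_tail_support]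
        simp [List.count_append, List.count_cons] at h4
        omega
      by_cases hdi : ∀ w ∈ r1.support, w ∈ A ∨ w ∈ r2.support
      · -- excise this loop: t' := r2
        left
        refine ⟨r2, ?_, ?_, ?_⟩
        · have hl := congrArg Walk.length hspec
          rw [Walk.length_append] at hl
          simp only [Walk.length_cons]
          omega
        · intro w hw
          rw [htc] at hw
          rcases List.mem_cons.mp hw with rfl | hw
          · exact Or.inr r2.start_mem_support
          · rcases List.mem_append.mp hw with hw | hw
            · exact hdi w hw
            · exact Or.inr (List.mem_of_mem_tail hw)
        · intro x hx
          have hxu : x ≠ u := fun h => hx (h ▸ huU)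
          have hx1 : x ∉ r1.support := by
            intro hmem
            have hAx := hA x hx
            rw [htc] at hAx
            have hxc1 : 1 ≤ r1.support.count x := List.count_pos_iff.mpr hmem
            rcases hdi x hmem with hcase | hcase
            · have : 1 ≤ A.count x := List.count_pos_iff.mpr hcase
              simp [List.count_append, List.count_cons, hxu] at hAx
              omega
            · have hxtail : x ∈ r2.support.tail := by
                rw [hS2] at hcase
                rcases List.mem_cons.mp hcase with rfl | h
                · exact absurd rfl hxu
                · exact h
              have : 1 ≤ r2.support.tail.count x := List.count_pos_iff.mpr hxtail
              simp [List.count_append, List.count_cons, hxu] at hAx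
              omega
          have h0 : r1.support.count x = 0 := List.count_eq_zero.mpr hx1
          conv_lhs => rw [hS2]
          rw [htc]
          simp [List.count_append, List.count_cons, hxu, h0, -Walk.cons_tail_support]
      · push_neg at hdi
        obtain ⟨v, hv1, hvA, hv2⟩ := hdi
        have hAcounts : ∀ x ∉ U, ((A ++ r1.support) ++ r2.support).count x = 1 := by
          intro x hx
          have hAx := hA x hx
          rw [htc] at hAx
          conv_lhs => rw [hS2]
          simp only [List.count_append, List.count_cons] at hAx ⊢
          omega
        rcases exciseAux k r2 (A ++ r1.support) hcr2 hAcounts with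
          ⟨t2, ht2len, ht2cov, ht2cnt⟩ | ⟨D, hD1, hD2, hD3⟩
        · left
          have hT2 : t2.support = u :: t2.support.tail := t2.support_eq_cons
          refine ⟨Walk.cons e (r1.append t2), ?_, ?_, ?_⟩
          · have hl := congrArg Walk.length hspec
            rw [Walk.length_append] at hl
            simp only [Walk.length_cons, Walk.length_append]
            omega
          · intro w hw
            have hmem' : w ∈ (Walk.cons e (r1.append t2)).support ↔
                w = u ∨ w ∈ r1.support ∨ w ∈ t2.support.tail := by
              rw [Walk.support_cons, Walk.support_append]
              simp [List.mem_cons, List.mem_append]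
            rw [htc] at hw
            rcases List.mem_cons.mp hw with rfl | hw
            · exact Or.inr (hmem'.mpr (Or.inl rfl))
            rcases List.mem_append.mp hw with hw | hw
            · exact Or.inr (hmem'.mpr (Or.inr (Or.inl hw)))
            · have hw2 : w ∈ r2.support := List.mem_of_mem_tail hw
              rcases ht2cov w hw2 with hc | hc
              · rcases List.mem_append.mp hc with hc | hc
                · exact Or.inl hc
                · exact Or.inr (hmem'.mpr (Or.inr (Or.inl hc)))
              · rw [hT2] at hc
                rcases List.mem_cons.mp hc with rfl | hc
                · exact Or.inr (hmem'.mpr (Or.inl rfl))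
                · exact Or.inr (hmem'.mpr (Or.inr (Or.inr hc)))
          · intro x hx
            have hkey := ht2cnt x hx
            have htt : t2.support.tail.count x = r2.support.tail.count x := by
              conv at hkey => rw [hT2, hS2]
              simpa [List.count_cons, -Walk.cons_tail_support] using hkey
            rw [htc]
            rw [Walk.support_cons, Walk.support_append]
            simp [List.count_cons, List.count_append, htt]
        · right
          have hvr2 : v ∉ D := fun h => (hD3 v h) (List.mem_append_right A hv1)
          refine ⟨insert v D, ?_, ?_, ?_⟩
          · rw [Finset.card_insert_of_notMem hvr2]; omega
          · intro hmem
            rcases Finset.mem_insert.mp hmem with rfl | h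
            · exact hv2 r2.start_mem_support
            · exact hD2 h
          · intro w hw
            rcases Finset.mem_insert.mp hw with rfl | h
            · exact hvA
            · exact fun hwA => (hD3 w h) (List.mem_append_left _ hwA)


private lemma excise {a b : V} (p : G.Walk a b) (u : V)
    (hcount : Fintype.card V + 1 ≤ p.support.count u)
    (hA : ∀ x ∉ U, p.support.count x = 1) :
    ∃ p' : G.Walk a b, p'.length < p.length ∧
      (∀ w ∈ p.support, w ∈ p'.support) ∧
      (∀ x ∉ U, p'.support.count x = 1) := by
  have hu : u ∈ p.support := by rw [← List.count_pos_iff]; omega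
  set p1 := p.takeUntil u hu with hp1
  set t0 := p.dropUntil u hu with ht0
  have hspec : p1.append t0 = p := p.take_spec hu
  have hsupp : p.support = p1.support ++ t0.support.tail := by
    rw [← hspec, Walk.support_append]
  have hS0 : t0.support = u :: t0.support.tail := t0.support_eq_cons
  have hc1 : p1.support.count u = 1 := p.count_support_takeUntil_eq_one hu
  have hcount0 : Fintype.card V + 1 ≤ t0.support.count u := by
    have h1 : p.support.count u = p1.support.count u + t0.support.tail.count u := by
      rw [hsupp, List.count_append]
    have h2 : t0.support.count u = t0.support.tail.count u + 1 := by
      conv_lhs => rw [hS0]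
      simp [List.count_cons, -Walk.cons_tail_support]
    omega
  have hAeq : ∀ x ∉ U, ((p1.support.erase u) ++ t0.support).count x = 1 := by
    intro x hx
    have h1 := hA x hx
    rw [hsupp] at h1
    have he : (p1.support.erase u).count x
        = p1.support.count x - if u = x then 1 else 0 := by
      rw [List.count_erase]
      simp
    have h2 : t0.support.count x = t0.support.tail.count x + (if u = x then 1 else 0) := by
      conv_lhs => rw [hS0]
      simp [List.count_cons, -Walk.cons_tail_support]
    have h3 : (if u = x then 1 else 0) ≤ p1.support.count x := by
      split_ifs with h
      · subst h; omega
      · omega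
    rw [List.count_append, he, h2]
    rw [List.count_append] at h1
    omega
  rcases exciseAux (U := U) (Fintype.card V) t0 (p1.support.erase u) hcount0 hAeq with
    ⟨t', ht'len, ht'cov, ht'cnt⟩ | ⟨D, hD1, hD2, _⟩
  · have hT' : t'.support = u :: t'.support.tail := t'.support_eq_cons
    refine ⟨p1.append t', ?_, ?_, ?_⟩
    · have hl := congrArg Walk.length hspec
      rw [Walk.length_append] at hl
      rw [Walk.length_append]
      omega
    · intro w hw
      rw [Walk.mem_support_append_iff]
      rw [hsupp] at hw
      rcases List.mem_append.mp hw with hw | hw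
      · exact Or.inl hw
      · rcases ht'cov w (List.mem_of_mem_tail hw) with hc | hc
        · exact Or.inl (List.mem_of_mem_erase hc)
        · exact Or.inr hc
    · intro x hx
      have h1 := hA x hx
      have hkey := ht'cnt x hx
      rw [hsupp, List.count_append] at h1
      rw [Walk.support_append, List.count_append]
      conv at hkey => rw [hT', hS0]
      by_cases hxu : x = u
      · subst hxu
        simp only [List.count_cons_self] at hkey
        omega
      · rw [List.count_cons_of_ne (Ne.symm hxu), List.count_cons_of_ne (Ne.symm hxu)] at hkey
        omega
  · exfalso
    have : (insert u D).card ≤ Fintype.card V := Finset.card_le_univ _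
    rw [Finset.card_insert_of_notMem hD2] at this
    omega

lemma bounded_walk {a b : V} (p : G.Walk a b)
    (hcov : ∀ x, x ∈ p.support) (hcnt : ∀ x ∉ U, p.support.count x = 1) :
    ∃ p' : G.Walk a b, (∀ x, x ∈ p'.support) ∧ (∀ x ∉ U, p'.support.count x = 1) ∧
      ∀ u, p'.support.count u ≤ Fintype.card V := by
  by_cases hb : ∀ u, p.support.count u ≤ Fintype.card V
  · exact ⟨p, hcov, hcnt, hb⟩
  · push_neg at hb
    obtain ⟨u, hu⟩ := hb
    obtain ⟨p', h1, h2, h3⟩ := excise p u (by omega) hcnt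
    exact bounded_walk p' (fun x => h2 x (hcov x)) h3
termination_by p.length
decreasing_by exact h1


end Excise



@[reducible] instance (priority := 2000) hcpBEq : BEq (↥Uᶜ ⊕ ↥U × Fin N) := instBEqOfDecidableEq

def pr : (↥Uᶜ ⊕ ↥U × Fin N) → V := Sum.elim Subtype.val (fun p => p.1.1)

@[simp] lemma pr_inl (z : ↥Uᶜ) : pr (U := U) (N := N) (Sum.inl z) = z.1 := rfl
@[simp] lemma pr_inr (p : ↥U × Fin N) : pr (U := U) (Sum.inr p) = p.1.1 := rfl

lemma pr_eq_iff_inl {w : ↥Uᶜ ⊕ ↥U × Fin N} {x : V} (hx : x ∉ U) :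
    pr w = x ↔ w = Sum.inl ⟨x, hx⟩ := by
  cases w with
  | inl z =>
    simp [pr, Subtype.ext_iff]
  | inr p =>
    simp only [pr_inr]
    constructor
    · intro h; exact absurd (h ▸ p.1.2) hx
    · intro h; simp at h

lemma hcp_adj_cases {a b : ↥Uᶜ ⊕ ↥U × Fin N} (h : (hcpGraph G U N).Adj a b) :
    pr a = pr b ∨ G.Adj (pr a) (pr b) := by
  rw [hcpGraph, fromRel_adj] at h
  obtain ⟨hne, h | h⟩ := h
  · cases a <;> cases b <;> simp only [hcpRel] at h
    · exact Or.inr h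
    · exact Or.inr h
    · exact Or.inr h
    · rcases h with ⟨h1, _⟩ | h
      · exact Or.inl (by simp [h1])
      · exact Or.inr h
  · cases a <;> cases b <;> simp only [hcpRel] at h
    · exact Or.inr h.symm
    · exact Or.inr h.symm
    · exact Or.inr h.symm
    · rcases h with ⟨h1, _⟩ | h
      · exact Or.inl (by simp [h1])
      · exact Or.inr h.symm

def projWalk : {a b : ↥Uᶜ ⊕ ↥U × Fin N} → (hcpGraph G U N).Walk a b → G.Walk (pr a) (pr b)
  | _, _, .nil => .nil
  | a, _, @Walk.cons _ _ _ m _ h q =>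
      if he : pr a = pr m then (projWalk q).copy he.symm rfl
      else Walk.cons ((hcp_adj_cases h).resolve_left he) (projWalk q)

lemma projWalk_mem_support {a b : ↥Uᶜ ⊕ ↥U × Fin N} (p : (hcpGraph G U N).Walk a b) :
    ∀ w ∈ p.support, pr w ∈ (projWalk p).support := by
  induction p with
  | nil => intro w hw; simp at hw; simp [projWalk, hw]
  | @cons a m b h q ih =>
    intro w hw
    rw [support_cons] at hw
    rw [projWalk]
    split_ifs with he
    · rw [support_copy]
      rcases List.mem_cons.mp hw with rfl | hw
      · rw [he]; exact (projWalk q).start_mem_support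
      · exact ih w hw
    · rw [support_cons]
      rcases List.mem_cons.mp hw with rfl | hw
      · exact List.mem_cons_self
      · exact List.mem_cons_of_mem _ (ih w hw)

lemma projWalk_count {a b : ↥Uᶜ ⊕ ↥U × Fin N} (p : (hcpGraph G U N).Walk a b)
    {x : V} (hx : x ∉ U) :
    (projWalk p).support.count x = p.support.count (Sum.inl ⟨x, hx⟩) := by
  induction p with
  | @nil a =>
    by_cases hax : pr (U := U) (N := N) a = x
    · obtain rfl := (pr_eq_iff_inl hx).mp hax
      simp [projWalk]
    · have ha : a ≠ Sum.inl ⟨x, hx⟩ := by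
        intro hh
        exact hax (by rw [hh, pr_inl])
      simp [projWalk, List.count_cons, List.count_nil, hax, ha, Ne.symm ha, Ne.symm hax, beq_iff_eq]
  | @cons a m b h q ih =>
    rw [projWalk]
    split_ifs with he
    · rw [support_copy, support_cons]
      have ha : a ≠ Sum.inl ⟨x, hx⟩ := by
        intro hh
        subst hh
        have hm : m = Sum.inl ⟨x, hx⟩ := (pr_eq_iff_inl hx).mp he.symm
        exact (hcpGraph G U N).loopless.irrefl _ (by rw [hm] at h; exact h)
      rw [List.count_cons_of_ne ha]
      exact ih
    · rw [support_cons, support_cons, List.count_cons, List.count_cons, ih]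
      congr 1
      by_cases hax : pr (U := U) (N := N) a = x
      · obtain rfl := (pr_eq_iff_inl hx).mp hax
        simp [beq_iff_eq]
      · have ha : a ≠ Sum.inl ⟨x, hx⟩ := by
          intro hh
          exact hax (by rw [hh, pr_inl])
        simp [hax, ha, Ne.symm ha, Ne.symm hax, beq_iff_eq]


section Forward

lemma hcp_adj_succ (u : ↥U) (j : ℕ) (hj : j < N) (h : j + 1 < N) :
    (hcpGraph G U N).Adj (Sum.inr (u, ⟨j, hj⟩)) (Sum.inr (u, ⟨j + 1, h⟩)) := by
  rw [hcpGraph, SimpleGraph.fromRel_adj]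
  constructor
  · simp [Prod.ext_iff, Fin.ext_iff]
  · exact Or.inl (Or.inl ⟨rfl, (Nat.mod_eq_of_lt h).symm⟩)

def seg (u : ↥U) (j : ℕ) (hj : j < N) :
    (hcpGraph G U N).Walk (Sum.inr (u, ⟨j, hj⟩)) (Sum.inr (u, ⟨N - 1, by omega⟩)) :=
  if h : j + 1 < N then
    Walk.cons (hcp_adj_succ u j hj h) (seg u (j + 1) h)
  else
    Walk.nil.copy rfl (by
      simp only [Sum.inr.injEq, Prod.mk.injEq, Fin.mk.injEq, eq_self_iff_true, true_and]
      omega)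
termination_by N - j

lemma seg_count_inr (u : ↥U) : ∀ (j : ℕ) (hj : j < N) (w : ↥U × Fin N),
    (seg (G := G) u j hj).support.count (Sum.inr w) =
      if w.1 = u ∧ j ≤ (w.2 : ℕ) then 1 else 0
  | j, hj, w => by
    obtain ⟨w1, w2⟩ := w
    have hw2 : (w2 : ℕ) < N := w2.2
    rw [seg]
    by_cases h : j + 1 < N
    · rw [dif_pos h, Walk.support_cons, List.count_cons,
        seg_count_inr u (j + 1) h ⟨w1, w2⟩]
      by_cases h1 : w1 = u
      · subst h1
        simp only [Sum.inr.injEq, Prod.mk.injEq, Fin.ext_iff, beq_iff_eq, true_and]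
        split_ifs <;> simp_all <;> omega
      · have hne : ¬((Sum.inr (u, (⟨j, hj⟩ : Fin N)) : ↥Uᶜ ⊕ ↥U × Fin N)
            = Sum.inr (w1, w2)) := by
          simp only [Sum.inr.injEq, Prod.mk.injEq, not_and]
          intro hh _
          exact h1 hh.symm
        rw [if_neg (by tauto : ¬(w1 = u ∧ j + 1 ≤ (w2 : ℕ))),
          if_neg (by tauto : ¬(w1 = u ∧ j ≤ (w2 : ℕ)))]
        simp [List.count_cons, hne, Ne.symm hne]
    · rw [dif_neg h, Walk.support_copy, Walk.support_nil]
      by_cases h1 : w1 = u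
      · subst h1
        simp only [List.count_cons, List.count_nil, Sum.inr.injEq, Prod.mk.injEq, Fin.ext_iff,
          beq_iff_eq, true_and]
        split_ifs <;> simp_all <;> omega
      · have hne : ¬((Sum.inr (u, (⟨j, hj⟩ : Fin N)) : ↥Uᶜ ⊕ ↥U × Fin N)
            = Sum.inr (w1, w2)) := by
          simp only [Sum.inr.injEq, Prod.mk.injEq, not_and]
          intro hh _
          exact h1 hh.symm
        rw [if_neg (by tauto : ¬(w1 = u ∧ j ≤ (w2 : ℕ)))]
        simp [List.count_cons, hne, Ne.symm hne]
termination_by j => N - j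

lemma seg_count_inl (u : ↥U) : ∀ (j : ℕ) (hj : j < N) (z : ↥Uᶜ),
    (seg (G := G) u j hj).support.count (Sum.inl z) = 0
  | j, hj, z => by
    rw [seg]
    by_cases h : j + 1 < N
    · rw [dif_pos h, Walk.support_cons, List.count_cons, seg_count_inl u (j + 1) h z]
      simp
    · rw [dif_neg h, Walk.support_copy, Walk.support_nil]
      simp
termination_by j => N - j

variable [DecidablePred (· ∈ U)]

def fstV (hN : 0 < N) (c : V → ℕ) (k : ℕ) (x : V) : ↥Uᶜ ⊕ ↥U × Fin N :=
  if hx : x ∈ U then Sum.inr (⟨x, hx⟩, ⟨(c x - k) % N, Nat.mod_lt _ hN⟩) else Sum.inl ⟨x, hx⟩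

def endV (hN : 0 < N) (b : V) : ↥Uᶜ ⊕ ↥U × Fin N :=
  if hb : b ∈ U then Sum.inr (⟨b, hb⟩, ⟨N - 1, by omega⟩) else Sum.inl ⟨b, hb⟩

@[simp] lemma pr_fstV (hN : 0 < N) (c : V → ℕ) (k : ℕ) (x : V) :
    pr (fstV (U := U) hN c k x) = x := by
  unfold fstV
  split_ifs <;> rfl

@[simp] lemma pr_endV (hN : 0 < N) (b : V) : pr (endV (U := U) hN b) = b := by
  unfold endV
  split_ifs <;> rfl

lemma adj_fstV (hN : 0 < N) (c : V → ℕ) (k : ℕ) {w : ↥Uᶜ ⊕ ↥U × Fin N} {y : V}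
    (h : G.Adj (pr w) y) : (hcpGraph G U N).Adj w (fstV (U := U) hN c k y) := by
  have hne : w ≠ fstV (U := U) hN c k y := by
    intro hh
    exact G.ne_of_adj h (by rw [hh, pr_fstV])
  rw [hcpGraph, SimpleGraph.fromRel_adj]
  refine ⟨hne, Or.inl ?_⟩
  cases w with
  | inl z =>
    unfold fstV
    split_ifs with hy
    · exact h
    · exact h
  | inr p =>
    unfold fstV
    split_ifs with hy
    · exact Or.inr h
    · exact h


lemma inr_eq_iff {u : ↥U} {i : Fin N} {x : V} (hx : x ∈ U) (m : ℕ) (hm : m < N) :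
    (Sum.inr (u, i) : ↥Uᶜ ⊕ ↥U × Fin N) = Sum.inr (⟨x, hx⟩, ⟨m, hm⟩) ↔
      u.1 = x ∧ (i : ℕ) = m := by
  simp [Prod.ext_iff, Subtype.ext_iff, Fin.ext_iff]

lemma inr_eq_iff' {u : ↥U} {i : Fin N} {x : V} (hx : x ∈ U) (m : ℕ) (hm : m < N) :
    (Sum.inr (⟨x, hx⟩, ⟨m, hm⟩) : ↥Uᶜ ⊕ ↥U × Fin N) = Sum.inr (u, i) ↔
      u.1 = x ∧ (i : ℕ) = m := by
  rw [eq_comm, inr_eq_iff]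

def liftW (hN : 0 < N) (c : V → ℕ) : {x b : V} → (p : G.Walk x b) →
    (hcpGraph G U N).Walk (fstV (U := U) hN c (p.support.count x) x) (endV (U := U) hN b)
  | x, _, Walk.nil =>
    if hb : x ∈ U then
      (seg (G := G) ⟨x, hb⟩ ((c x - 1) % N) (Nat.mod_lt _ hN)).copy
        (by simp [fstV, hb]) (by simp [endV, hb])
    else
      (Walk.nil (u := Sum.inl ⟨x, hb⟩)).copy
        (by simp [fstV, hb]) (by simp [endV, hb])
  | x, b, @Walk.cons _ _ _ y _ h q =>
    if hx : x ∈ U then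
      if hlast : q.support.count x = 0 then
        ((seg (G := G) ⟨x, hx⟩ ((c x - 1) % N) (Nat.mod_lt _ hN)).append
            (Walk.cons
              (adj_fstV hN c (q.support.count y)
                (w := Sum.inr (⟨x, hx⟩, ⟨N - 1, by omega⟩)) h)
              (liftW hN c q))).copy
          (by simp [fstV, hx, List.count_cons, hlast]) rfl
      else
        (Walk.cons
          (adj_fstV hN c (q.support.count y)
            (w := Sum.inr (⟨x, hx⟩, ⟨(c x - (q.support.count x + 1)) % N, Nat.mod_lt _ hN⟩)) h)
          (liftW hN c q)).copy
          (by simp [fstV, hx, List.count_cons]) rfl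
    else
      (Walk.cons (adj_fstV hN c (q.support.count y) (w := Sum.inl ⟨x, hx⟩) h)
        (liftW hN c q)).copy (by simp [fstV, hx]) rfl


lemma liftW_count_inl (hN : 0 < N) (c : V → ℕ) {x b : V} (p : G.Walk x b) (z : ↥Uᶜ) :
    (liftW (G := G) hN c p).support.count (Sum.inl z) = p.support.count z.1 := by
  induction p with
  | @nil x0 =>
    rw [liftW]
    split_ifs with hb
    · rw [Walk.support_copy, seg_count_inl]
      have hz : z.1 ≠ x0 := fun hh => z.2 (hh ▸ hb)
      simp [List.count_cons, hz, Ne.symm hz]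
    · rw [Walk.support_copy, Walk.support_nil, Walk.support_nil]
      by_cases hz : z.1 = x0
      · have hzz : z = ⟨x0, hb⟩ := Subtype.ext hz
        subst hzz
        simp
      · have : (Sum.inl z : ↥Uᶜ ⊕ ↥U × Fin N) ≠ Sum.inl ⟨x0, hb⟩ := by
          simp [Subtype.ext_iff]
          exact hz
        simp [List.count_cons, this, Ne.symm this, hz, Ne.symm hz]
  | @cons x y b h q ih =>
    rw [liftW]
    split_ifs with hx hlast
    · rw [Walk.support_copy, Walk.support_append, List.count_append, seg_count_inl,
        Walk.support_cons, List.tail_cons, ih]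
      have hz : z.1 ≠ x := fun hh => z.2 (hh ▸ hx)
      rw [Walk.support_cons, List.count_cons_of_ne (Ne.symm hz)]
      omega
    · have hz : z.1 ≠ x := fun hh => z.2 (hh ▸ hx)
      rw [Walk.support_copy, Walk.support_cons, List.count_cons_of_ne (by simp), ih,
        Walk.support_cons, List.count_cons_of_ne (Ne.symm hz)]
    · rw [Walk.support_copy, Walk.support_cons, List.count_cons, ih,
        Walk.support_cons, List.count_cons]
      congr 1
      by_cases hz : z.1 = x
      · have hzz : z = ⟨x, hx⟩ := Subtype.ext hz
        subst hzz
        simp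
      · have : (Sum.inl z : ↥Uᶜ ⊕ ↥U × Fin N) ≠ Sum.inl ⟨x, hx⟩ := by
          simp [Subtype.ext_iff]
          exact hz
        simp [this, Ne.symm this, hz, Ne.symm hz]

lemma liftW_count_inr (hN : 0 < N) (c : V → ℕ) {x b : V} (p : G.Walk x b)
    (hc : ∀ v, p.support.count v ≤ c v) (hcN : ∀ v, c v ≤ N) (u : ↥U) (i : Fin N) :
    (liftW (G := G) hN c p).support.count (Sum.inr (u, i)) =
      if 1 ≤ p.support.count u.1 ∧ c u.1 - p.support.count u.1 ≤ (i : ℕ) then 1 else 0 := by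
  have hiN : (i : ℕ) < N := i.2
  induction p with
  | @nil x0 =>
    have h1 : (Walk.nil (u := x0) : G.Walk x0 x0).support.count x0 = 1 := by simp
    rw [liftW]
    by_cases hb : x0 ∈ U
    · rw [dif_pos hb, Walk.support_copy, seg_count_inr]
      by_cases hu : u.1 = x0
      · have h2 : 1 ≤ c x0 := le_trans (le_of_eq h1.symm) (hc x0)
        have h3 : c x0 ≤ N := hcN x0
        have hmod : (c x0 - 1) % N = c x0 - 1 := Nat.mod_eq_of_lt (by omega)
        have huu : (u, i).1 = (⟨x0, hb⟩ : ↥U) := Subtype.ext hu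
        rw [hu, h1, hmod]
        by_cases hci : c x0 - 1 ≤ (i : ℕ)
        · rw [if_pos ⟨huu, hci⟩, if_pos ⟨le_refl 1, hci⟩]
        · rw [if_neg (fun hcon => hci hcon.2), if_neg (fun hcon => hci hcon.2)]
      · have hcnt : (Walk.nil (u := x0) : G.Walk x0 x0).support.count u.1 = 0 := by
          simp [List.count_cons, hu, Ne.symm hu]
        rw [hcnt, if_neg (fun hcon => hu (congrArg Subtype.val hcon.1)),
          if_neg (by omega : ¬(1 ≤ 0 ∧ c u.1 - 0 ≤ (i : ℕ)))]
    · rw [dif_neg hb, Walk.support_copy, Walk.support_nil]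
      have hu : u.1 ≠ x0 := fun hh => hb (hh ▸ u.2)
      have hcnt : (Walk.nil (u := x0) : G.Walk x0 x0).support.count u.1 = 0 := by
        simp [List.count_cons, hu, Ne.symm hu]
      rw [hcnt, if_neg (by omega : ¬(1 ≤ 0 ∧ c u.1 - 0 ≤ (i : ℕ)))]
      simp [List.count_cons]
  | @cons x y b h q ih =>
    have hc' : ∀ v, q.support.count v ≤ c v := by
      intro v
      have := hc v
      rw [Walk.support_cons, List.count_cons] at this
      omega
    have ihq := ih hc'
    rw [liftW]
    by_cases hx : x ∈ U
    · rw [dif_pos hx]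
      by_cases hlast : q.support.count x = 0
      · -- last occurrence of x ∈ U
        rw [dif_pos hlast, Walk.support_copy, Walk.support_append, List.count_append,
          seg_count_inr, Walk.support_cons, List.tail_cons, ihq]
        have hk : (Walk.cons h q).support.count x = 1 := by
          rw [Walk.support_cons, List.count_cons_self, hlast]
        by_cases hu : u.1 = x
        · have h2 : 1 ≤ c x := le_trans (le_of_eq hk.symm) (hc x)
          have h3 : c x ≤ N := hcN x
          have hmod : (c x - 1) % N = c x - 1 := Nat.mod_eq_of_lt (by omega)
          have huu : (u, i).1 = (⟨x, hx⟩ : ↥U) := Subtype.ext hu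
          have hcnt : (Walk.cons h q).support.count u.1 = 1 := by rw [hu]; exact hk
          have hcnt0 : q.support.count u.1 = 0 := by rw [hu]; exact hlast
          rw [hcnt, hcnt0, hmod, hu,
            if_neg (by omega : ¬(1 ≤ 0 ∧ c x - 0 ≤ (i : ℕ)))]
          by_cases hci : c x - 1 ≤ (i : ℕ)
          · rw [if_pos ⟨huu, hci⟩, if_pos ⟨le_refl 1, hci⟩]
          · rw [if_neg (fun hcon => hci hcon.2), if_neg (fun hcon => hci hcon.2)]
        · have hcc : (Walk.cons h q).support.count u.1 = q.support.count u.1 := by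
            rw [Walk.support_cons, List.count_cons_of_ne (Ne.symm hu)]
          rw [hcc, if_neg (fun hcon => hu (congrArg Subtype.val hcon.1))]
          omega
      · -- non-last occurrence of x ∈ U
        rw [dif_neg hlast, Walk.support_copy, Walk.support_cons, List.count_cons, ihq]
        by_cases hu : u.1 = x
        · have hk : (Walk.cons h q).support.count x = q.support.count x + 1 := by
            rw [Walk.support_cons, List.count_cons_self]
          have h2 : q.support.count x + 1 ≤ c x := le_trans (le_of_eq hk.symm) (hc x)
          have h3 : c x ≤ N := hcN x
          have hq1 : 1 ≤ q.support.count x := by omega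
          have hmod : (c x - (q.support.count x + 1)) % N = c x - (q.support.count x + 1) :=
            Nat.mod_eq_of_lt (by omega)
          have hcond : ((Sum.inr (⟨x, hx⟩, ⟨(c x - (q.support.count x + 1)) % N,
              Nat.mod_lt _ hN⟩) : ↥Uᶜ ⊕ ↥U × Fin N) = Sum.inr (u, i)) ↔
              (i : ℕ) = c x - (q.support.count x + 1) := by
            rw [inr_eq_iff' hx]
            simp [hmod, hu]
          rw [hu, hk]
          simp only [beq_iff_eq]
          by_cases hieq : (i : ℕ) = c x - (q.support.count x + 1)
          · rw [if_pos (hcond.mpr hieq),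
              if_neg (by omega : ¬(1 ≤ q.support.count x ∧ c x - q.support.count x ≤ (i : ℕ))),
              if_pos (by omega : 1 ≤ q.support.count x + 1 ∧
                c x - (q.support.count x + 1) ≤ (i : ℕ))]
          · rw [if_neg (fun hcon => hieq (hcond.mp hcon))]
            by_cases hci : c x - q.support.count x ≤ (i : ℕ)
            · rw [if_pos ⟨hq1, hci⟩, if_pos (by omega)]
            · rw [if_neg (by omega), if_neg (by omega)]
        · have hcc : (Walk.cons h q).support.count u.1 = q.support.count u.1 := by
            rw [Walk.support_cons, List.count_cons_of_ne (Ne.symm hu)]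
          have hcond : ¬((Sum.inr (⟨x, hx⟩, ⟨(c x - (q.support.count x + 1)) % N,
              Nat.mod_lt _ hN⟩) : ↥Uᶜ ⊕ ↥U × Fin N) = Sum.inr (u, i)) := by
            rw [inr_eq_iff' hx]
            tauto
          rw [hcc]
          simp only [beq_iff_eq, hcond, if_false]
          omega
    · -- x ∉ U
      have hu : u.1 ≠ x := fun hh => hx (hh ▸ u.2)
      rw [dif_neg hx, Walk.support_copy, Walk.support_cons, List.count_cons_of_ne (by simp), ihq,
        Walk.support_cons, List.count_cons_of_ne (Ne.symm hu)]

end Forward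


lemma isPath_length_le_one {α : Type*} {G' : SimpleGraph α} {s t : α} (p : G'.Walk s t)
    (hp : p.IsPath) (he : s(t, s) ∈ p.edges) : p.length ≤ 1 := by
  cases p with
  | nil => simp at he
  | @cons _ m _ h' q =>
    rw [Walk.edges_cons, List.mem_cons] at he
    rcases he with he | he
    · rw [Sym2.eq_iff] at he
      rcases he with ⟨rfl, rfl⟩ | ⟨rfl, -⟩
      · exact absurd h' (G'.loopless.irrefl _)
      · cases q with
        | nil => simp
        | @cons _ z _ h'' r =>
          exfalso
          rw [Walk.cons_isPath_iff] at hp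
          have h2 := hp.1
          rw [Walk.cons_isPath_iff] at h2
          exact h2.2 r.end_mem_support
    · exfalso
      have hs : s ∈ q.support := Walk.snd_mem_support_of_mem_edges q he
      rw [Walk.cons_isPath_iff] at hp
      exact hp.2 hs

end HCPAux

/-- Let `G` be a finite connected simple graph with `N ≥ 3` vertices and `U` a subset of its
vertices.  Then `G` has a walk visiting every vertex, with adjacent start and end vertices, in
which every vertex not in `U` occurs exactly once, if and only if the HCP construction `G'`
(with `N = |V|` copies of each vertex of `U`) has a Hamiltonian cycle. -/
theorem unbounded_hamiltonian_cycle_iff_hcp_construction_hamiltonian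
    {V : Type*} [Fintype V] [DecidableEq V] (G : SimpleGraph V) (hG : G.Connected)
    (U : Set V) (hN : 3 ≤ Fintype.card V) :
    (∃ (a b : V) (_ : G.Adj a b) (W : G.Walk a b),
        (∀ x : V, x ∈ W.support) ∧ ∀ x ∉ U, W.support.count x = 1) ↔
    (∃ (v : (↥Uᶜ) ⊕ (↥U × Fin (Fintype.card V)))
        (C : (hcpGraph G U (Fintype.card V)).Walk v v), C.IsHamiltonianCycle) := by
  classical
  have hN0 : 0 < Fintype.card V := by omega
  constructor
  · rintro ⟨a, b, hab, W, hWcov, hWcnt⟩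
    obtain ⟨W', hcov, hcnt, hbnd⟩ := HCPAux.bounded_walk (U := U) W hWcov hWcnt
    set c : V → ℕ := fun v => W'.support.count v with hcdef
    have hcle : ∀ v, W'.support.count v ≤ c v := fun v => le_refl _
    have hcN : ∀ v, c v ≤ Fintype.card V := fun v => hbnd v
    set L := HCPAux.liftW (G := G) (U := U) hN0 c W' with hLdef
    have hadj : (hcpGraph G U (Fintype.card V)).Adj (HCPAux.endV (U := U) hN0 b)
        (HCPAux.fstV (U := U) hN0 c (W'.support.count a) a) := by
      apply HCPAux.adj_fstV
      rw [HCPAux.pr_endV]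
      exact hab.symm
    refine ⟨_, Walk.cons hadj L, ?_⟩
    have hcount1 : ∀ w, L.support.count w = 1 := by
      intro w
      cases w with
      | inl z =>
        rw [hLdef, HCPAux.liftW_count_inl]
        exact hcnt z.1 z.2
      | inr pq =>
        obtain ⟨u, i⟩ := pq
        rw [hLdef, HCPAux.liftW_count_inr hN0 c W' hcle hcN u i]
        have h1 : 1 ≤ W'.support.count u.1 := List.count_pos_iff.mpr (hcov u.1)
        have h2 : c u.1 = W'.support.count u.1 := rfl
        rw [if_pos ⟨h1, by omega⟩]
    have hmemAll : ∀ w, w ∈ L.support := by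
      intro w
      rw [← List.count_pos_iff, hcount1]
      omega
    have hpath : L.IsPath :=
      SimpleGraph.Walk.IsPath.mk'
        (List.nodup_iff_count_le_one.mpr fun w => le_of_eq (hcount1 w))
    have hlen : 2 ≤ L.length := by
      have hinj : Function.Injective
          (fun v : V => HCPAux.fstV (U := U) (N := Fintype.card V) hN0 c (c v) v) := by
        intro v w hvw
        have h3 := congrArg HCPAux.pr hvw
        rwa [HCPAux.pr_fstV, HCPAux.pr_fstV] at h3
      have h1 : Fintype.card V ≤ Fintype.card ((↥Uᶜ) ⊕ (↥U × Fin (Fintype.card V))) :=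
        Fintype.card_le_of_injective _ hinj
      have h2 : Fintype.card ((↥Uᶜ) ⊕ (↥U × Fin (Fintype.card V))) ≤ L.support.length := by
        have hsub : Finset.univ ⊆ L.support.toFinset :=
          fun w _ => List.mem_toFinset.mpr (hmemAll w)
        calc Fintype.card ((↥Uᶜ) ⊕ (↥U × Fin (Fintype.card V))) = Finset.univ.card := rfl
          _ ≤ L.support.toFinset.card := Finset.card_le_card hsub
          _ ≤ L.support.length := L.support.toFinset_card_le
      have h3 : L.support.length = L.length + 1 := Walk.length_support L
      omega
    rw [Walk.isHamiltonianCycle_iff_isCycle_and_support_count_tail_eq_one]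
    constructor
    · rw [Walk.cons_isCycle_iff]
      refine ⟨hpath, fun he => ?_⟩
      have := HCPAux.isPath_length_le_one L hpath he
      omega
    · intro w
      rw [Walk.support_cons, List.tail_cons]
      exact hcount1 w
  · rintro ⟨v, C, hC⟩
    set W0 := HCPAux.projWalk (G := G) C with hW0def
    have hcov0 : ∀ x : V, x ∈ W0.support := by
      intro x
      have hx' : ∃ w : (↥Uᶜ) ⊕ (↥U × Fin (Fintype.card V)), HCPAux.pr w = x := by
        by_cases hx : x ∈ U
        · exact ⟨Sum.inr (⟨x, hx⟩, ⟨0, hN0⟩), rfl⟩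
        · exact ⟨Sum.inl ⟨x, hx⟩, rfl⟩
      obtain ⟨w, rfl⟩ := hx'
      exact HCPAux.projWalk_mem_support C w (hC.mem_support w)
    have hcnt0 : ∀ x, (hx : x ∉ U) →
        W0.support.count x = (if Sum.inl ⟨x, hx⟩ = v then 2 else 1) := by
      intro x hx
      rw [hW0def, HCPAux.projWalk_count C hx]
      split_ifs with hv
      · rw [hv]
        exact hC.count_support_self
      · exact hC.support_count_of_ne (fun hh => hv hh.symm)
    have hnil : ¬W0.Nil := by
      intro hnil
      rw [Walk.nil_iff_support_eq] at hnil
      obtain ⟨x, y, hxy⟩ := Fintype.exists_pair_of_one_lt_card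
        (by omega : 1 < Fintype.card V)
      have hx := hcov0 x
      have hy := hcov0 y
      rw [hnil] at hx hy
      simp only [List.mem_singleton] at hx hy
      exact hxy (hx.trans hy.symm)
    have hnilrev : ¬W0.reverse.Nil := by
      rw [Walk.nil_iff_length_eq, Walk.length_reverse, ← Walk.nil_iff_length_eq]
      exact hnil
    obtain ⟨y, hadj, q, hq⟩ := SimpleGraph.Walk.not_nil_iff.mp hnilrev
    refine ⟨y, HCPAux.pr v, hadj.symm, q, ?_, ?_⟩
    · intro x
      have hxs : x ∈ W0.reverse.support := by
        rw [Walk.support_reverse, List.mem_reverse]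
        exact hcov0 x
      rw [hq, Walk.support_cons] at hxs
      rcases List.mem_cons.mp hxs with rfl | hxs
      · exact q.end_mem_support
      · exact hxs
    · intro x hx
      have hcnt := hcnt0 x hx
      have hrev : W0.reverse.support.count x = W0.support.count x := by
        rw [Walk.support_reverse, List.count_reverse]
      rw [hq, Walk.support_cons, List.count_cons] at hrev
      by_cases hv : Sum.inl ⟨x, hx⟩ = v
      · rw [if_pos hv] at hcnt
        have hpv : HCPAux.pr v = x := by rw [← hv]; rfl
        simp only [beq_iff_eq, if_pos hpv] at hrev
        omega
      · rw [if_neg hv] at hcnt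
        have hpv : ¬(HCPAux.pr v = x) := by
          intro hh
          exact hv ((HCPAux.pr_eq_iff_inl hx).mp hh).symm
        simp only [beq_iff_eq, if_neg hpv] at hrev
        omega
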